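/- Equip the lexicographic square [0,1] ×ₗ [0,1] (the product of the unit interval with itself, ordered lexicographically and carrying the order topology) with its order topology. Then the first-coordinate projection f : [0,1] ×ₗ [0,1] → [0,1], f(x,y) = x, is continuous, non-constant, and locally extremal: every point of the lexicographic square is a point of local minimum or a point of local maximum of f. -/

import Mathlib

open Set

/-- The lexicographic square: `[0,1] ×ₗ [0,1]` with the order topology of the
lexicographic order. -/
noncomputable instance lexSquareTopology :
    TopologicalSpace (Icc (0:ℝ) 1 ×ₗ Icc (0:ℝ) 1) :=
  Preorder.topology _

instance lexSquareOrderTopology : OrderTopology (Icc (0:ℝ) 1 ×ₗ Icc (0:ℝ) 1) :=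
  ⟨rfl⟩

private lemma lexlt (p q : Icc (0:ℝ) 1 ×ₗ Icc (0:ℝ) 1) :
    p < q ↔ (ofLex p).1 < (ofLex q).1 ∨ (ofLex p).1 = (ofLex q).1 ∧ (ofLex p).2 < (ofLex q).2 :=
  Prod.Lex.lt_iff

/-- The first-coordinate projection of the lexicographic square is continuous,
non-constant, and locally extremal. -/
theorem stmt_10 :
    Continuous (fun p : Icc (0:ℝ) 1 ×ₗ Icc (0:ℝ) 1 => ((ofLex p).1 : ℝ)) ∧
    (¬ ∀ p q : Icc (0:ℝ) 1 ×ₗ Icc (0:ℝ) 1, ((ofLex p).1 : ℝ) = ((ofLex q).1 : ℝ)) ∧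
    (∀ p : Icc (0:ℝ) 1 ×ₗ Icc (0:ℝ) 1,
      IsLocalMin (fun p : Icc (0:ℝ) 1 ×ₗ Icc (0:ℝ) 1 => ((ofLex p).1 : ℝ)) p ∨
      IsLocalMax (fun p : Icc (0:ℝ) 1 ×ₗ Icc (0:ℝ) 1 => ((ofLex p).1 : ℝ)) p) := by
  refine ⟨?_, ?_, ?_⟩
  · -- continuity
    rw [OrderTopology.topology_eq_generate_intervals (α := ℝ), continuous_generateFrom_iff]
    rintro s ⟨a, rfl | rfl⟩
    · -- preimage of Ioi a
      by_cases h1 : 1 ≤ a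
      · convert isOpen_empty
        ext p
        simp only [mem_preimage, mem_Ioi, mem_empty_iff_false, iff_false, not_lt]
        exact le_trans (ofLex p).1.2.2 h1
      · by_cases h0 : a < 0
        · convert isOpen_univ
          ext p
          simp only [mem_preimage, mem_Ioi, mem_univ, iff_true]
          exact lt_of_lt_of_le h0 (ofLex p).1.2.1
        · push_neg at h0 h1
          have : (fun p : Icc (0:ℝ) 1 ×ₗ Icc (0:ℝ) 1 => ((ofLex p).1 : ℝ)) ⁻¹' Ioi a =
              Ioi (toLex (⟨a, h0, h1.le⟩, ⟨1, zero_le_one, le_refl 1⟩)) := by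
            ext p
            simp only [mem_preimage, mem_Ioi]
            rw [lexlt]
            constructor
            · intro h
              left
              exact h
            · rintro (h | ⟨h, h2⟩)
              · exact h
              · exact absurd h2 (not_lt.mpr (ofLex p).2.2.2)
          rw [this]
          exact isOpen_Ioi
    · -- preimage of Iio a
      by_cases h0 : a ≤ 0
      · convert isOpen_empty
        ext p
        simp only [mem_preimage, mem_Iio, mem_empty_iff_false, iff_false, not_lt]
        exact le_trans h0 (ofLex p).1.2.1
      · by_cases h1 : 1 < a
        · convert isOpen_univ
          ext p
          simp only [mem_preimage, mem_Iio, mem_univ, iff_true]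
          exact lt_of_le_of_lt (ofLex p).1.2.2 h1
        · push_neg at h0 h1
          have : (fun p : Icc (0:ℝ) 1 ×ₗ Icc (0:ℝ) 1 => ((ofLex p).1 : ℝ)) ⁻¹' Iio a =
              Iio (toLex (⟨a, h0.le, h1⟩, ⟨0, le_refl 0, zero_le_one⟩)) := by
            ext p
            simp only [mem_preimage, mem_Iio]
            rw [lexlt]
            constructor
            · intro h
              left
              exact h
            · rintro (h | ⟨h, h2⟩)
              · exact h
              · exact absurd h2 (not_lt.mpr (ofLex p).2.2.1)
          rw [this]
          exact isOpen_Iio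
  · -- non-constant
    intro h
    have := h (toLex (⟨0, le_refl 0, zero_le_one⟩, ⟨0, le_refl 0, zero_le_one⟩))
      (toLex (⟨1, zero_le_one, le_refl 1⟩, ⟨0, le_refl 0, zero_le_one⟩))
    norm_num at this
  · -- locally extremal
    intro p
    by_cases hb : ((ofLex p).2 : ℝ) = 1
    · left
      have hmem : p ∈ Ioi (toLex ((ofLex p).1, ⟨0, le_refl 0, zero_le_one⟩)) := by
        rw [mem_Ioi, lexlt]
        right
        refine ⟨rfl, ?_⟩
        rw [← Subtype.coe_lt_coe, hb]
        norm_num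
      refine Filter.eventually_of_mem (isOpen_Ioi.mem_nhds hmem) ?_
      intro q hq
      rw [mem_Ioi, lexlt] at hq
      rcases hq with h | ⟨h, _⟩
      · exact le_of_lt h
      · exact le_of_eq (congrArg Subtype.val (show (ofLex p).1 = (ofLex q).1 from h))
    · right
      have hmem : p ∈ Iio (toLex ((ofLex p).1, ⟨1, zero_le_one, le_refl 1⟩)) := by
        rw [mem_Iio, lexlt]
        right
        refine ⟨rfl, ?_⟩
        rw [← Subtype.coe_lt_coe]
        exact lt_of_le_of_ne (ofLex p).2.2.2 hb
      refine Filter.eventually_of_mem (isOpen_Iio.mem_nhds hmem) ?_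
      intro q hq
      rw [mem_Iio, lexlt] at hq
      rcases hq with h | ⟨h, _⟩
      · exact le_of_lt h
      · exact le_of_eq (congrArg Subtype.val (show (ofLex q).1 = (ofLex p).1 from h))
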